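/- Let P(x) = a0 x^4 + a1 x^3 + a2 x^2 + a3 x + a4 and let R_1(x,x0) be the biquadratic polynomial satisfying R(x,x0)^2 + R_1(x,x0)(x-x0)^2 = P(x)P(x0), where R is the polarized form of P as above. Then the diagonal restriction Q(x) := R_1(x,x) satisfies Q(x) = (1/3) P(x) P''(x) - (1/4) P'(x)^2. -/

import Mathlib

open Polynomial

/-- If `R1(x,x0)` is the biquadratic polynomial with
`R(x,x0)^2 + R1(x,x0)(x-x0)^2 = P(x)P(x0)` for the quartic `P` and its polarized form `R`,
then the diagonal `Q(x) := R1(x,x)` equals `(1/3) P(x) P''(x) - (1/4) P'(x)^2`. -/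
theorem diagonal_of_R1_eq_covariant
    {K : Type*} [Field K] [CharZero K] (a0 a1 a2 a3 a4 : K)
    (P : K[X]) (hP : P = C a0 * X ^ 4 + C a1 * X ^ 3 + C a2 * X ^ 2 + C a3 * X + C a4)
    (R : K → K → K)
    (hR : ∀ x x0, R x x0 =
      a0 * x ^ 2 * x0 ^ 2 + a1 / 2 * (x * x0) * (x + x0) + a2 / 6 * (x ^ 2 + x0 ^ 2)
        + 2 * a2 / 3 * (x * x0) + a3 / 2 * (x + x0) + a4)
    (R1 : K → K → K)
    (hbideg : ∃ c : Fin 3 → Fin 3 → K, ∀ x x0,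
      R1 x x0 = ∑ i : Fin 3, ∑ j : Fin 3, c i j * x ^ (i : ℕ) * x0 ^ (j : ℕ))
    (hident : ∀ x x0, R x x0 ^ 2 + R1 x x0 * (x - x0) ^ 2 = P.eval x * P.eval x0) :
    ∀ x, R1 x x =
      (1 : K) / 3 * (P.eval x * (derivative (derivative P)).eval x)
        - (1 : K) / 4 * ((derivative P).eval x) ^ 2 := by
  intro x
  obtain ⟨c, hc⟩ := hbideg
  have key : R1 x x = 3 * R1 x (x + 1) - 3 * R1 x (x + 2) + R1 x (x + 3) := by
    simp only [hc, Fin.sum_univ_three, Fin.val_zero, Fin.val_one, Fin.val_two]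
    ring
  have h1 := hident x (x + 1)
  have h2 := hident x (x + 2)
  have h3 := hident x (x + 3)
  have s1 : (x - (x + 1)) ^ 2 = (1 : K) := by ring
  have s2 : (x - (x + 2)) ^ 2 = (4 : K) := by ring
  have s3 : (x - (x + 3)) ^ 2 = (9 : K) := by ring
  rw [s1] at h1; rw [s2] at h2; rw [s3] at h3
  have e1 : R1 x (x + 1) = P.eval x * P.eval (x + 1) - R x (x + 1) ^ 2 := by
    linear_combination h1
  have e2 : R1 x (x + 2) = (P.eval x * P.eval (x + 2) - R x (x + 2) ^ 2) / 4 := by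
    linear_combination h2 / 4
  have e3 : R1 x (x + 3) = (P.eval x * P.eval (x + 3) - R x (x + 3) ^ 2) / 9 := by
    linear_combination h3 / 9
  rw [key, e1, e2, e3, hR, hR, hR]
  simp only [hP, derivative_add, derivative_mul, derivative_C, derivative_X_pow,
    derivative_X, eval_add, eval_mul, eval_pow, eval_C, eval_X, eval_natCast,
    derivative_zero, derivative_one, eval_zero, eval_one]
  push_cast
  field_simp
  ring
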